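/- Let a, b, c, d be nonnegative integers with b, d positive, gcd(a,b) = 1, gcd(c,d) = 1, and D = bc − ad > 0. Then there exists a positive integer v with gcd(D, v) = 1 such that the tree T(a/b, c/d) is equivalent to the tree T(0/1, D/v). -/

import Mathlib

/-- The mediant of two rationals `p` and `q`: `(num p + num q) / (den p + den q)`. -/
def mediant (p q : ℚ) : ℚ := ((p.num + q.num : ℤ) : ℚ) / ((p.den + q.den : ℕ) : ℚ)

/-- Insert between every pair of consecutive entries of a list their mediant. -/
def insertMediants : List ℚ → List ℚ
  | [] => []
  | [p] => [p]
  | p :: q :: rest => p :: mediant p q :: insertMediants (q :: rest)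

/-- The sequences of the tree `T(r, s)`: `S r s 0 = [r, s]`, and each successive
sequence is obtained by inserting mediants between consecutive entries. -/
def S (r s : ℚ) : ℕ → List ℚ
  | 0 => [r, s]
  | n + 1 => insertMediants (S r s n)


/-- Two trees `T(r1, s1)` and `T(r2, s2)` are equivalent if the mediant inserted at each
position reduces by exactly the same factor in both trees: for every row `n` and every
`j`-th consecutive pair `(p, q)` of `S r1 s1 n` and `(p', q')` of `S r2 s2 n`,
`gcd (num p + num q) (den p + den q) = gcd (num p' + num q') (den p' + den q')`. -/
def TreesEquiv (r1 s1 r2 s2 : ℚ) : Prop :=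
  ∀ n j, (h1 : j + 1 < (S r1 s1 n).length) → (h2 : j + 1 < (S r2 s2 n).length) →
    Int.gcd ((S r1 s1 n)[j].num + (S r1 s1 n)[j + 1].num)
            (((S r1 s1 n)[j].den : ℤ) + ((S r1 s1 n)[j + 1].den : ℤ)) =
    Int.gcd ((S r2 s2 n)[j].num + (S r2 s2 n)[j + 1].num)
            (((S r2 s2 n)[j].den : ℤ) + ((S r2 s2 n)[j + 1].den : ℤ))

/-- A unimodular change of coordinates preserves gcds. -/
lemma unimod_gcd (a b r s X Y : ℤ) (h : a * r + b * s = 1) :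
    Int.gcd (b * X - a * Y) (r * X + s * Y) = Int.gcd X Y := by
  apply Nat.dvd_antisymm
  · rw [← Int.natCast_dvd_natCast]
    apply Int.dvd_coe_gcd
    · have h1 : (Int.gcd (b * X - a * Y) (r * X + s * Y) : ℤ) ∣
          s * (b * X - a * Y) + a * (r * X + s * Y) :=
        dvd_add (Dvd.dvd.mul_left (Int.gcd_dvd_left _ _) s) (Dvd.dvd.mul_left (Int.gcd_dvd_right _ _) a)
      rwa [show s * (b * X - a * Y) + a * (r * X + s * Y) = X by linear_combination X * h] at h1
    · have h1 : (Int.gcd (b * X - a * Y) (r * X + s * Y) : ℤ) ∣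
          b * (r * X + s * Y) - r * (b * X - a * Y) :=
        dvd_sub (Dvd.dvd.mul_left (Int.gcd_dvd_right _ _) b) (Dvd.dvd.mul_left (Int.gcd_dvd_left _ _) r)
      rwa [show b * (r * X + s * Y) - r * (b * X - a * Y) = Y by linear_combination Y * h] at h1
  · rw [← Int.natCast_dvd_natCast]
    apply Int.dvd_coe_gcd
    · exact dvd_sub (Dvd.dvd.mul_left (Int.gcd_dvd_left _ _) b) (Dvd.dvd.mul_left (Int.gcd_dvd_right _ _) a)
    · exact dvd_add (Dvd.dvd.mul_left (Int.gcd_dvd_left _ _) r) (Dvd.dvd.mul_left (Int.gcd_dvd_right _ _) s)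

/-- Numerator and denominator of `X / Y` in terms of the gcd. -/
lemma rat_num_den_mul_gcd (X Y : ℤ) (hY : 0 < Y) :
    ((X : ℚ) / (Y : ℚ)).num * Int.gcd X Y = X ∧
    (((X : ℚ) / (Y : ℚ)).den : ℤ) * Int.gcd X Y = Y := by
  set g : ℤ := (Int.gcd X Y : ℤ) with hg
  have hgnat : 0 < Int.gcd X Y := by
    apply Nat.pos_of_ne_zero
    intro h0
    exact absurd ((Int.gcd_eq_zero_iff.mp h0).2) hY.ne'
  have hgpos : 0 < g := by rw [hg]; exact_mod_cast hgnat
  obtain ⟨x, hx⟩ : g ∣ X := Int.gcd_dvd_left X Y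
  obtain ⟨y, hy⟩ : g ∣ Y := Int.gcd_dvd_right X Y
  have hypos : 0 < y := by
    by_contra hle
    push_neg at hle
    nlinarith
  have hcop : Nat.Coprime x.natAbs y.natAbs := by
    have := Int.gcd_div_gcd_div_gcd (i := X) (j := Y) hgnat
    have hxg : X / g = x := by rw [hx]; exact Int.mul_ediv_cancel_left x hgpos.ne'
    have hyg : Y / g = y := by rw [hy]; exact Int.mul_ediv_cancel_left y hgpos.ne'
    rw [← hg, hxg, hyg] at this
    exact this
  have heq : (X : ℚ) / (Y : ℚ) = (x : ℚ) / (y : ℚ) := by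
    rw [hx, hy]
    push_cast
    rw [mul_div_mul_left]
    exact_mod_cast hgpos.ne'
  rw [heq]
  constructor
  · rw [Rat.num_div_eq_of_coprime hypos hcop]; linarith [hx]
  · rw [Rat.den_div_eq_of_coprime hypos hcop]; linarith [hy]

/-- The relation between corresponding entries of the two trees. -/
def MRel (a b r s : ℤ) (p p' : ℚ) : Prop :=
  p'.num = b * p.num - a * p.den ∧ (p'.den : ℤ) = r * p.num + s * p.den

lemma mediant_rel (a b r s : ℤ) (h : a * r + b * s = 1) {p q p' q' : ℚ}
    (hp : MRel a b r s p p') (hq : MRel a b r s q q') :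
    MRel a b r s (mediant p q) (mediant p' q') := by
  obtain ⟨hp1, hp2⟩ := hp
  obtain ⟨hq1, hq2⟩ := hq
  set X : ℤ := p.num + q.num with hX
  set Y : ℤ := (p.den : ℤ) + (q.den : ℤ) with hY
  have hYpos : 0 < Y := by positivity
  have hX' : p'.num + q'.num = b * X - a * Y := by rw [hp1, hq1, hX, hY]; ring
  have hY' : (p'.den : ℤ) + (q'.den : ℤ) = r * X + s * Y := by rw [hp2, hq2, hX, hY]; ring
  have hY'pos : 0 < (p'.den : ℤ) + (q'.den : ℤ) := by positivity
  have hmed : mediant p q = (X : ℚ) / (Y : ℚ) := by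
    rw [mediant, hX, hY]; push_cast; ring_nf
  have hmed' : mediant p' q' = ((b * X - a * Y : ℤ) : ℚ) / ((r * X + s * Y : ℤ) : ℚ) := by
    rw [mediant,
      show ((p'.den + q'.den : ℕ) : ℚ) = (((p'.den : ℤ) + (q'.den : ℤ) : ℤ) : ℚ) by push_cast; ring,
      hX', hY']
  have hg : Int.gcd (b * X - a * Y) (r * X + s * Y) = Int.gcd X Y := unimod_gcd a b r s X Y h
  obtain ⟨hn, hd⟩ := rat_num_den_mul_gcd X Y hYpos
  have hY'pos2 : 0 < r * X + s * Y := by rw [← hY']; positivity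
  obtain ⟨hn', hd'⟩ := rat_num_den_mul_gcd (b * X - a * Y) (r * X + s * Y) hY'pos2
  rw [hg] at hn' hd'
  have hgne : (Int.gcd X Y : ℤ) ≠ 0 := by
    have : Int.gcd X Y ≠ 0 := by
      intro h0; exact absurd ((Int.gcd_eq_zero_iff.mp h0).2) hYpos.ne'
    exact_mod_cast this
  constructor
  · rw [hmed, hmed']
    apply mul_right_cancel₀ hgne
    rw [hn']
    rw [show b * X - a * Y =
        b * (((X : ℚ) / (Y : ℚ)).num * Int.gcd X Y) - a * ((((X : ℚ) / (Y : ℚ)).den : ℤ) * Int.gcd X Y)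
        by rw [hn, hd]]
    ring
  · rw [hmed, hmed']
    apply mul_right_cancel₀ hgne
    rw [hd']
    rw [show r * X + s * Y =
        r * (((X : ℚ) / (Y : ℚ)).num * Int.gcd X Y) + s * ((((X : ℚ) / (Y : ℚ)).den : ℤ) * Int.gcd X Y)
        by rw [hn, hd]]
    ring

lemma insertMediants_rel (a b r s : ℤ) (h : a * r + b * s = 1) :
    ∀ (L L' : List ℚ), List.Forall₂ (MRel a b r s) L L' →
      List.Forall₂ (MRel a b r s) (insertMediants L) (insertMediants L') := by
  intro L
  induction L with
  | nil =>
    intro L' hF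
    cases hF
    simp [insertMediants]
  | cons p tl ih =>
    intro L' hF
    cases hF with
    | cons hp hF' =>
      rename_i p' tl'
      cases tl with
      | nil =>
        cases hF'
        exact List.Forall₂.cons hp List.Forall₂.nil
      | cons q rest =>
        cases hF' with
        | cons hq hF'' =>
          rename_i q' rest'
          show List.Forall₂ _ (p :: mediant p q :: insertMediants (q :: rest))
            (p' :: mediant p' q' :: insertMediants (q' :: rest'))
          exact List.Forall₂.cons hp (List.Forall₂.cons (mediant_rel a b r s h hp hq)
            (ih _ (List.Forall₂.cons hq hF'')))

lemma S_rel (a b r s : ℤ) (h : a * r + b * s = 1) (r1 s1 r2 s2 : ℚ)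
    (h0 : List.Forall₂ (MRel a b r s) [r1, s1] [r2, s2]) (n : ℕ) :
    List.Forall₂ (MRel a b r s) (S r1 s1 n) (S r2 s2 n) := by
  induction n with
  | zero => exact h0
  | succ n ih => exact insertMediants_rel a b r s h _ _ ih

lemma treesEquiv_of_mrel (a b r s : ℤ) (h : a * r + b * s = 1) (r1 s1 r2 s2 : ℚ)
    (h0 : List.Forall₂ (MRel a b r s) [r1, s1] [r2, s2]) :
    TreesEquiv r1 s1 r2 s2 := by
  intro n j h1 h2
  have hF := S_rel a b r s h r1 s1 r2 s2 h0 n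
  obtain ⟨hlen, hget⟩ := List.forall₂_iff_get.mp hF
  have hj : MRel a b r s (S r1 s1 n)[j] (S r2 s2 n)[j] := by
    have := hget j (by omega) (by omega)
    simpa using this
  have hj1 : MRel a b r s (S r1 s1 n)[j + 1] (S r2 s2 n)[j + 1] := by
    have := hget (j + 1) (by omega) (by omega)
    simpa using this
  obtain ⟨e1, e2⟩ := hj
  obtain ⟨f1, f2⟩ := hj1
  rw [e1, e2, f1, f2]
  rw [show b * (S r1 s1 n)[j].num - a * (S r1 s1 n)[j].den +
        (b * (S r1 s1 n)[j+1].num - a * (S r1 s1 n)[j+1].den) =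
      b * ((S r1 s1 n)[j].num + (S r1 s1 n)[j+1].num) -
        a * (((S r1 s1 n)[j].den : ℤ) + (S r1 s1 n)[j+1].den) by ring,
    show r * (S r1 s1 n)[j].num + s * (S r1 s1 n)[j].den +
        (r * (S r1 s1 n)[j+1].num + s * (S r1 s1 n)[j+1].den) =
      r * ((S r1 s1 n)[j].num + (S r1 s1 n)[j+1].num) +
        s * (((S r1 s1 n)[j].den : ℤ) + (S r1 s1 n)[j+1].den) by ring]
  exact (unimod_gcd a b r s _ _ h).symm

/-- For any tree `T(a/b, c/d)` with cross-determinant `D = bc - ad > 0`, there is a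
positive integer `v` coprime to `D` such that `T(a/b, c/d)` is equivalent to
`T(0/1, D/v)`. -/
theorem exists_equiv_tree_zero_D_v (a b c d : ℕ) (hb : 0 < b) (hd : 0 < d)
    (hab : Nat.gcd a b = 1) (hcd : Nat.gcd c d = 1) (hD : a * d < b * c) :
    ∃ v : ℕ, 0 < v ∧ Nat.gcd (b * c - a * d) v = 1 ∧
      TreesEquiv ((a : ℚ) / b) ((c : ℚ) / d) 0 (((b * c - a * d : ℕ) : ℚ) / v) := by
  set A : ℤ := (a : ℤ)
  set B : ℤ := (b : ℤ)
  set C : ℤ := (c : ℤ)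
  set E : ℤ := (d : ℤ)
  have hB : 0 < B := by show (0:ℤ) < (b:ℤ); exact_mod_cast hb
  have hE : 0 < E := by show (0:ℤ) < (d:ℤ); exact_mod_cast hd
  have hDZ : A * E < B * C := by show (a:ℤ)*(d:ℤ) < (b:ℤ)*(c:ℤ); exact_mod_cast hD
  have hDnat : (((b * c - a * d : ℕ)) : ℤ) = B * C - A * E := by
    have : a * d ≤ b * c := hD.le
    push_cast [Nat.cast_sub this]
    ring
  -- Bezout coefficients
  have hbez : A * (Nat.gcdA a b) + B * (Nat.gcdB a b) = 1 := by
    have := Nat.gcd_eq_gcd_ab a b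
    rw [hab] at this
    push_cast at this ⊢
    linarith
  set r₀ : ℤ := Nat.gcdA a b
  set s₀ : ℤ := Nat.gcdB a b
  set w : ℤ := r₀ * C + s₀ * E with hw
  set k : ℤ := |w| + 1 with hk
  set r : ℤ := r₀ + k * B with hr
  set s : ℤ := s₀ - k * A with hs
  have h1 : A * r + B * s = 1 := by rw [hr, hs]; linear_combination hbez
  set v' : ℤ := r * C + s * E with hv'
  have hv'eq : v' = w + k * (B * C - A * E) := by rw [hv', hw, hr, hs]; ring
  have hDpos : 0 < B * C - A * E := by linarith
  have hv'pos : 0 < v' := by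
    rw [hv'eq]
    have h2 : 1 ≤ B * C - A * E := hDpos
    have h3 : 0 ≤ |w| := abs_nonneg w
    have h4 : -w ≤ |w| := neg_le_abs w
    nlinarith
  set v : ℕ := v'.toNat with hv
  have hvZ : (v : ℤ) = v' := Int.toNat_of_nonneg hv'pos.le
  have hvpos : 0 < v := by omega
  -- gcd(D, v) = 1
  have hgcdDv : Nat.gcd (b * c - a * d) v = 1 := by
    have : Int.gcd ((b * c - a * d : ℕ) : ℤ) (v : ℤ) = Nat.gcd (b * c - a * d) v := by
      exact Int.gcd_natCast_natCast _ _
    rw [← this, hDnat, hvZ, hv']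
    have := unimod_gcd A B r s C E h1
    rw [this]
    have : Int.gcd C E = Nat.gcd c d := by exact Int.gcd_natCast_natCast _ _
    rw [this, hcd]
  refine ⟨v, hvpos, hgcdDv, ?_⟩
  -- base case of the relation
  have habZ : Nat.Coprime ((A : ℤ)).natAbs ((B : ℤ)).natAbs := by
    simpa [A, B] using hab
  have hcdZ : Nat.Coprime ((C : ℤ)).natAbs ((E : ℤ)).natAbs := by
    simpa [C, E] using hcd
  have hnum1 : ((a : ℚ) / b).num = A := by
    rw [show ((a : ℚ) / b) = (((a:ℕ):ℤ) : ℚ) / (((b:ℕ):ℤ) : ℚ) by push_cast; ring]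
    exact Rat.num_div_eq_of_coprime hB habZ
  have hden1 : (((a : ℚ) / b).den : ℤ) = B := by
    rw [show ((a : ℚ) / b) = (((a:ℕ):ℤ) : ℚ) / (((b:ℕ):ℤ) : ℚ) by push_cast; ring]
    exact Rat.den_div_eq_of_coprime hB habZ
  have hnum2 : ((c : ℚ) / d).num = C := by
    rw [show ((c : ℚ) / d) = (((c:ℕ):ℤ) : ℚ) / (((d:ℕ):ℤ) : ℚ) by push_cast; ring]
    exact Rat.num_div_eq_of_coprime hE hcdZ
  have hden2 : (((c : ℚ) / d).den : ℤ) = E := by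
    rw [show ((c : ℚ) / d) = (((c:ℕ):ℤ) : ℚ) / (((d:ℕ):ℤ) : ℚ) by push_cast; ring]
    exact Rat.den_div_eq_of_coprime hE hcdZ
  have hDvcop : Nat.Coprime (((b * c - a * d : ℕ) : ℤ)).natAbs (((v : ℕ) : ℤ)).natAbs := by
    simpa using hgcdDv
  have hvZpos : 0 < ((v : ℕ) : ℤ) := by exact_mod_cast hvpos
  have hnum3 : ((((b * c - a * d : ℕ)) : ℚ) / (v : ℚ)).num = B * C - A * E := by
    rw [show ((((b * c - a * d : ℕ)) : ℚ) / (v : ℚ)) =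
        ((((b * c - a * d : ℕ)) : ℤ) : ℚ) / (((v : ℕ) : ℤ) : ℚ) by push_cast; ring]
    rw [Rat.num_div_eq_of_coprime hvZpos hDvcop, hDnat]
  have hden3 : (((((b * c - a * d : ℕ)) : ℚ) / (v : ℚ)).den : ℤ) = v' := by
    rw [show ((((b * c - a * d : ℕ)) : ℚ) / (v : ℚ)) =
        ((((b * c - a * d : ℕ)) : ℤ) : ℚ) / (((v : ℕ) : ℤ) : ℚ) by push_cast; ring]
    rw [Rat.den_div_eq_of_coprime hvZpos hDvcop, hvZ]
  apply treesEquiv_of_mrel A B r s h1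
  refine List.Forall₂.cons ?_ (List.Forall₂.cons ?_ List.Forall₂.nil)
  · constructor
    · rw [hnum1, hden1, Rat.num_zero]; ring
    · rw [hnum1, hden1, Rat.den_zero]; push_cast; linarith [h1]
  · constructor
    · rw [hnum2, hden2, hnum3]
    · rw [hnum2, hden2, hden3, hv']
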